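/- arXiv:math-ph/0309058 — 2 statements merged into one kernel-verified Lean document; each statement's English description precedes it below -/
import Mathlib

section
/- The number of permutations P of {1,...,2n} that are involutions, satisfy P(2n+1−i) = 2n+1−P(i) for all i, and have exactly m_+ indices i in {1,...,n} with P(i)=i and exactly m_- indices i in {1,...,n} with P(i)=2n+1−i, equals t_{n,m_+,m_-} := n!/(m_+! m_-! ((n−m_+−m_-)/2)!), provided n−m_+−m_- is even and nonnegative (and the count is 0 otherwise). -/
open scoped Classical
open Finset Equiv

variable {α : Type*} [Fintype α] [DecidableEq α]

noncomputable def MSet (s : Finset α) (mp mm : ℕ) : Finset (Equiv.Perm α × (α → Bool)) :=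
  Finset.univ.filter (fun x =>
    (∀ i, x.1 (x.1 i) = i) ∧
    (∀ i ∉ s, x.1 i = i ∧ x.2 i = false) ∧
    (∀ i, x.2 (x.1 i) = x.2 i) ∧
    (s.filter (fun i => x.1 i = i ∧ x.2 i = false)).card = mp ∧
    (s.filter (fun i => x.1 i = i ∧ x.2 i = true)).card = mm)

theorem mem_MSet {s : Finset α} {mp mm : ℕ} {x : Equiv.Perm α × (α → Bool)} :
    x ∈ MSet s mp mm ↔
    (∀ i, x.1 (x.1 i) = i) ∧
    (∀ i ∉ s, x.1 i = i ∧ x.2 i = false) ∧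
    (∀ i, x.2 (x.1 i) = x.2 i) ∧
    (s.filter (fun i => x.1 i = i ∧ x.2 i = false)).card = mp ∧
    (s.filter (fun i => x.1 i = i ∧ x.2 i = true)).card = mm := by
  simp [MSet]

theorem MSet_filter_diag (s : Finset α) {a : α} (ha : a ∈ s) (mp mm : ℕ) :
    ((MSet s (mp+1) mm).filter (fun x => x.1 a = a ∧ x.2 a = false)).card
      = (MSet (s.erase a) mp mm).card := by
  apply Finset.card_bij' (fun x _ => x) (fun y _ => y)
  · intro x hx
    rw [Finset.mem_filter] at hx
    obtain ⟨hx, hQa, hεa⟩ := hx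
    rw [mem_MSet] at hx ⊢
    obtain ⟨hinv, hsupp, heps, hmp, hmm⟩ := hx
    refine ⟨hinv, ?_, heps, ?_, ?_⟩
    · intro i hi
      by_cases h : i = a
      · exact h ▸ ⟨hQa, hεa⟩
      · exact hsupp i (fun hs => hi (Finset.mem_erase.mpr ⟨h, hs⟩))
    · rw [Finset.filter_erase,
        Finset.card_erase_of_mem (Finset.mem_filter.mpr ⟨ha, hQa, hεa⟩), hmp]
      omega
    · rw [Finset.filter_erase, Finset.erase_eq_of_notMem, hmm]
      intro h
      rw [Finset.mem_filter] at h
      simp [hεa] at h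
  · intro y hy
    rw [mem_MSet] at hy
    obtain ⟨hinv, hsupp, heps, hmp, hmm⟩ := hy
    have hQa : y.1 a = a ∧ y.2 a = false := hsupp a (Finset.notMem_erase a s)
    rw [Finset.mem_filter, mem_MSet]
    refine ⟨⟨hinv, ?_, heps, ?_, ?_⟩, hQa.1, hQa.2⟩
    · intro i hi
      exact hsupp i (fun h => hi (Finset.mem_of_mem_erase h))
    · rw [← Finset.insert_erase ha, Finset.filter_insert, if_pos ⟨hQa.1, hQa.2⟩,
        Finset.card_insert_of_notMem, hmp]
      intro h
      exact Finset.notMem_erase a s (Finset.mem_of_mem_filter a h)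
    · rw [← Finset.insert_erase ha, Finset.filter_insert, if_neg, hmm]
      simp [hQa.2]
  · intros; rfl
  · intros; rfl

theorem MSet_filter_diag_zero (s : Finset α) {a : α} (ha : a ∈ s) (mm : ℕ) :
    ((MSet s 0 mm).filter (fun x => x.1 a = a ∧ x.2 a = false)) = ∅ := by
  ext x
  simp only [Finset.mem_filter, mem_MSet, Finset.notMem_empty, iff_false]
  rintro ⟨⟨-, -, -, hmp, -⟩, hQa, hεa⟩
  have : a ∈ s.filter (fun i => x.1 i = i ∧ x.2 i = false) :=
    Finset.mem_filter.mpr ⟨ha, hQa, hεa⟩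
  rw [Finset.card_eq_zero] at hmp
  simp [hmp] at this


theorem MSet_filter_anti (s : Finset α) {a : α} (ha : a ∈ s) (mp mm : ℕ) :
    ((MSet s mp (mm+1)).filter (fun x => x.1 a = a ∧ x.2 a = true)).card
      = (MSet (s.erase a) mp mm).card := by
  refine Finset.card_bij' (fun x _ => (x.1, Function.update x.2 a false))
    (fun y _ => (y.1, Function.update y.2 a true)) ?_ ?_ ?_ ?_
  · intro x hx
    rw [Finset.mem_filter] at hx
    obtain ⟨hx, hQa, hεa⟩ := hx
    rw [mem_MSet] at hx
    obtain ⟨hinv, hsupp, heps, hmp, hmm⟩ := hx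
    rw [mem_MSet]
    dsimp only
    have hQne : ∀ i, i ≠ a → x.1 i ≠ a := by
      intro i hi h
      exact hi (by rw [← hinv i, h, hQa])
    refine ⟨hinv, ?_, ?_, ?_, ?_⟩
    · intro i hi
      by_cases h : i = a
      · subst h; exact ⟨hQa, Function.update_self _ _ _⟩
      · have hs : i ∉ s := fun hs => hi (Finset.mem_erase.mpr ⟨h, hs⟩)
        exact ⟨(hsupp i hs).1, by rw [Function.update_of_ne h]; exact (hsupp i hs).2⟩
    · intro i
      by_cases h : i = a
      · subst h; rw [hQa]
      · rw [Function.update_of_ne (hQne i h), Function.update_of_ne h]; exact heps i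
    · rw [Finset.filter_congr (q := fun i => x.1 i = i ∧ x.2 i = false)
        (fun i hi => by rw [Function.update_of_ne (Finset.mem_erase.mp hi).1]),
        Finset.filter_erase, Finset.erase_eq_of_notMem, hmp]
      intro h
      rw [Finset.mem_filter] at h
      simp [hεa] at h
    · rw [Finset.filter_congr (q := fun i => x.1 i = i ∧ x.2 i = true)
        (fun i hi => by rw [Function.update_of_ne (Finset.mem_erase.mp hi).1]),
        Finset.filter_erase,
        Finset.card_erase_of_mem (Finset.mem_filter.mpr ⟨ha, hQa, hεa⟩), hmm]
      omega
  · intro y hy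
    rw [mem_MSet] at hy
    obtain ⟨hinv, hsupp, heps, hmp, hmm⟩ := hy
    have hQa : y.1 a = a ∧ y.2 a = false := hsupp a (Finset.notMem_erase a s)
    have hQne : ∀ i, i ≠ a → y.1 i ≠ a := by
      intro i hi h
      exact hi (by rw [← hinv i, h, hQa.1])
    rw [Finset.mem_filter, mem_MSet]
    dsimp only
    refine ⟨⟨hinv, ?_, ?_, ?_, ?_⟩, hQa.1, Function.update_self _ _ _⟩
    · intro i hi
      have h : i ≠ a := fun h => (h ▸ hi) ha
      exact ⟨(hsupp i (fun hh => hi (Finset.mem_of_mem_erase hh))).1,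
        by rw [Function.update_of_ne h]
           exact (hsupp i (fun hh => hi (Finset.mem_of_mem_erase hh))).2⟩
    · intro i
      by_cases h : i = a
      · subst h; rw [hQa.1]
      · rw [Function.update_of_ne (hQne i h), Function.update_of_ne h]; exact heps i
    · rw [← Finset.insert_erase ha, Finset.filter_insert, if_neg (by simp),
        Finset.filter_congr (q := fun i => y.1 i = i ∧ y.2 i = false)
        (fun i hi => by rw [Function.update_of_ne (Finset.mem_erase.mp hi).1]), hmp]
    · rw [← Finset.insert_erase ha, Finset.filter_insert,
        if_pos ⟨hQa.1, Function.update_self _ _ _⟩,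
        Finset.card_insert_of_notMem (fun h => Finset.notMem_erase a s
          (Finset.mem_of_mem_filter a h)),
        Finset.filter_congr (q := fun i => y.1 i = i ∧ y.2 i = true)
        (fun i hi => by rw [Function.update_of_ne (Finset.mem_erase.mp hi).1]), hmm]
  · intro x hx
    rw [Finset.mem_filter] at hx
    dsimp only
    ext1
    · rfl
    · simp only [Function.update_idem]
      exact Function.update_eq_self_iff.mpr hx.2.2.symm
  · intro y hy
    rw [mem_MSet] at hy
    dsimp only
    ext1
    · rfl
    · simp only [Function.update_idem]
      exact Function.update_eq_self_iff.mpr (hy.2.1 a (Finset.notMem_erase a s)).2.symm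

theorem MSet_filter_anti_zero (s : Finset α) {a : α} (ha : a ∈ s) (mp : ℕ) :
    ((MSet s mp 0).filter (fun x => x.1 a = a ∧ x.2 a = true)) = ∅ := by
  ext x
  simp only [Finset.mem_filter, mem_MSet, Finset.notMem_empty, iff_false]
  rintro ⟨⟨-, -, -, -, hmm⟩, hQa, hεa⟩
  have : a ∈ s.filter (fun i => x.1 i = i ∧ x.2 i = true) :=
    Finset.mem_filter.mpr ⟨ha, hQa, hεa⟩
  rw [Finset.card_eq_zero] at hmm
  simp [hmm] at this


theorem MSet_filter_pair (s : Finset α) {a b : α} (ha : a ∈ s) (hb : b ∈ s)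
    (hba : b ≠ a) (mp mm : ℕ) (v : Bool) :
    ((MSet s mp mm).filter (fun x => x.1 a = b ∧ x.2 a = v)).card
      = (MSet ((s.erase a).erase b) mp mm).card := by
  have hab : a ≠ b := fun h => hba h.symm
  refine Finset.card_bij'
    (fun x _ => (Equiv.swap a b * x.1, Function.update (Function.update x.2 a false) b false))
    (fun y _ => (Equiv.swap a b * y.1, Function.update (Function.update y.2 a v) b v))
    ?_ ?_ ?_ ?_
  · intro x hx
    rw [Finset.mem_filter] at hx
    obtain ⟨hx, hQa, hεa⟩ := hx
    rw [mem_MSet] at hx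
    obtain ⟨hinv, hsupp, heps, hmp, hmm⟩ := hx
    have hQb : x.1 b = a := by rw [← hQa, hinv]
    have hεb : x.2 b = v := by rw [← hQa, heps, hεa]
    have hk : ∀ i, i ≠ a → i ≠ b → x.1 i ≠ a ∧ x.1 i ≠ b := by
      intro i h1 h2
      constructor
      · intro h; exact h2 (by rw [← hinv i, h, hQa])
      · intro h; exact h1 (by rw [← hinv i, h, hQb])
    have hQ' : ∀ i, i ≠ a → i ≠ b → (Equiv.swap a b * x.1) i = x.1 i := by
      intro i h1 h2
      rw [Equiv.Perm.mul_apply, Equiv.swap_apply_of_ne_of_ne (hk i h1 h2).1 (hk i h1 h2).2]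
    have hQ'a : (Equiv.swap a b * x.1) a = a := by
      rw [Equiv.Perm.mul_apply, hQa, Equiv.swap_apply_right]
    have hQ'b : (Equiv.swap a b * x.1) b = b := by
      rw [Equiv.Perm.mul_apply, hQb, Equiv.swap_apply_left]
    have hε'a : Function.update (Function.update x.2 a false) b false a = false := by
      rw [Function.update_of_ne hab, Function.update_self]
    have hε'b : Function.update (Function.update x.2 a false) b false b = false :=
      Function.update_self _ _ _
    rw [mem_MSet]
    dsimp only
    refine ⟨?_, ?_, ?_, ?_, ?_⟩
    · intro i
      by_cases h1 : i = a
      · rw [h1, hQ'a, hQ'a]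
      by_cases h2 : i = b
      · rw [h2, hQ'b, hQ'b]
      · rw [hQ' i h1 h2, hQ' (x.1 i) (hk i h1 h2).1 (hk i h1 h2).2, hinv]
    · intro i hi
      by_cases h1 : i = a
      · rw [h1]; exact ⟨hQ'a, hε'a⟩
      by_cases h2 : i = b
      · rw [h2]; exact ⟨hQ'b, hε'b⟩
      · have hs : i ∉ s := by
          intro hs
          exact hi (Finset.mem_erase.mpr ⟨h2, Finset.mem_erase.mpr ⟨h1, hs⟩⟩)
        refine ⟨?_, ?_⟩
        · rw [hQ' i h1 h2, (hsupp i hs).1]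
        · rw [Function.update_of_ne h2, Function.update_of_ne h1]
          exact (hsupp i hs).2
    · intro i
      by_cases h1 : i = a
      · rw [h1, hQ'a]
      by_cases h2 : i = b
      · rw [h2, hQ'b]
      · rw [hQ' i h1 h2, Function.update_of_ne (hk i h1 h2).2,
          Function.update_of_ne (hk i h1 h2).1, Function.update_of_ne h2,
          Function.update_of_ne h1, heps]
    · rw [Finset.filter_congr (q := fun i => x.1 i = i ∧ x.2 i = false) ?_]
      · rw [Finset.filter_erase, Finset.filter_erase, Finset.erase_eq_of_notMem,
          Finset.erase_eq_of_notMem, hmp]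
        · intro h
          rw [Finset.mem_filter] at h
          exact hba (hQa.symm.trans h.2.1)
        · intro h
          rw [Finset.mem_erase, Finset.mem_filter] at h
          exact hab (hQb.symm.trans h.2.2.1)
      · intro i hi
        rw [Finset.mem_erase, Finset.mem_erase] at hi
        rw [hQ' i hi.2.1 hi.1, Function.update_of_ne hi.1, Function.update_of_ne hi.2.1]
    · rw [Finset.filter_congr (q := fun i => x.1 i = i ∧ x.2 i = true) ?_]
      · rw [Finset.filter_erase, Finset.filter_erase, Finset.erase_eq_of_notMem,
          Finset.erase_eq_of_notMem, hmm]
        · intro h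
          rw [Finset.mem_filter] at h
          exact hba (hQa.symm.trans h.2.1)
        · intro h
          rw [Finset.mem_erase, Finset.mem_filter] at h
          exact hab (hQb.symm.trans h.2.2.1)
      · intro i hi
        rw [Finset.mem_erase, Finset.mem_erase] at hi
        rw [hQ' i hi.2.1 hi.1, Function.update_of_ne hi.1, Function.update_of_ne hi.2.1]
  · intro y hy
    rw [mem_MSet] at hy
    obtain ⟨hinv, hsupp, heps, hmp, hmm⟩ := hy
    have hna : a ∉ (s.erase a).erase b := fun h =>
      Finset.notMem_erase a s (Finset.mem_of_mem_erase h)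
    have hnb : b ∉ (s.erase a).erase b := Finset.notMem_erase b _
    have hQa : y.1 a = a := (hsupp a hna).1
    have hεa : y.2 a = false := (hsupp a hna).2
    have hQb : y.1 b = b := (hsupp b hnb).1
    have hεb : y.2 b = false := (hsupp b hnb).2
    have hk : ∀ i, i ≠ a → i ≠ b → y.1 i ≠ a ∧ y.1 i ≠ b := by
      intro i h1 h2
      constructor
      · intro h; exact h1 (by rw [← hinv i, h, hQa])
      · intro h; exact h2 (by rw [← hinv i, h, hQb])
    have hQ' : ∀ i, i ≠ a → i ≠ b → (Equiv.swap a b * y.1) i = y.1 i := by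
      intro i h1 h2
      rw [Equiv.Perm.mul_apply, Equiv.swap_apply_of_ne_of_ne (hk i h1 h2).1 (hk i h1 h2).2]
    have hQ'a : (Equiv.swap a b * y.1) a = b := by
      rw [Equiv.Perm.mul_apply, hQa, Equiv.swap_apply_left]
    have hQ'b : (Equiv.swap a b * y.1) b = a := by
      rw [Equiv.Perm.mul_apply, hQb, Equiv.swap_apply_right]
    have hε'a : Function.update (Function.update y.2 a v) b v a = v := by
      rw [Function.update_of_ne hab, Function.update_self]
    have hε'b : Function.update (Function.update y.2 a v) b v b = v :=
      Function.update_self _ _ _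
    rw [Finset.mem_filter, mem_MSet]
    dsimp only
    refine ⟨⟨?_, ?_, ?_, ?_, ?_⟩, hQ'a, hε'a⟩
    · intro i
      by_cases h1 : i = a
      · rw [h1, hQ'a, hQ'b]
      by_cases h2 : i = b
      · rw [h2, hQ'b, hQ'a]
      · rw [hQ' i h1 h2, hQ' (y.1 i) (hk i h1 h2).1 (hk i h1 h2).2, hinv]
    · intro i hi
      have h1 : i ≠ a := fun h => hi (h ▸ ha)
      have h2 : i ≠ b := fun h => hi (h ▸ hb)
      have hs : i ∉ (s.erase a).erase b := fun h =>
        hi (Finset.mem_of_mem_erase (Finset.mem_of_mem_erase h))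
      refine ⟨?_, ?_⟩
      · rw [hQ' i h1 h2, (hsupp i hs).1]
      · rw [Function.update_of_ne h2, Function.update_of_ne h1]
        exact (hsupp i hs).2
    · intro i
      by_cases h1 : i = a
      · rw [h1, hQ'a, hε'b, hε'a]
      by_cases h2 : i = b
      · rw [h2, hQ'b, hε'a, hε'b]
      · rw [hQ' i h1 h2, Function.update_of_ne (hk i h1 h2).2,
          Function.update_of_ne (hk i h1 h2).1, Function.update_of_ne h2,
          Function.update_of_ne h1, heps]
    · have hsplit : s = insert a (insert b ((s.erase a).erase b)) := by
        rw [Finset.insert_erase (Finset.mem_erase.mpr ⟨hba, hb⟩), Finset.insert_erase ha]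
      have hc1 : ¬ ((Equiv.swap a b * y.1) a = a ∧
          Function.update (Function.update y.2 a v) b v a = false) :=
        fun h => hba (hQ'a.symm.trans h.1)
      have hc2 : ¬ ((Equiv.swap a b * y.1) b = b ∧
          Function.update (Function.update y.2 a v) b v b = false) :=
        fun h => hab (hQ'b.symm.trans h.1)
      rw [hsplit, Finset.filter_insert, Finset.filter_insert, if_neg hc1, if_neg hc2,
        Finset.filter_congr (q := fun i => y.1 i = i ∧ y.2 i = false) ?_, hmp]
      intro i hi
      rw [Finset.mem_erase, Finset.mem_erase] at hi
      rw [hQ' i hi.2.1 hi.1, Function.update_of_ne hi.1, Function.update_of_ne hi.2.1]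
    · have hsplit : s = insert a (insert b ((s.erase a).erase b)) := by
        rw [Finset.insert_erase (Finset.mem_erase.mpr ⟨hba, hb⟩), Finset.insert_erase ha]
      have hc1 : ¬ ((Equiv.swap a b * y.1) a = a ∧
          Function.update (Function.update y.2 a v) b v a = true) :=
        fun h => hba (hQ'a.symm.trans h.1)
      have hc2 : ¬ ((Equiv.swap a b * y.1) b = b ∧
          Function.update (Function.update y.2 a v) b v b = true) :=
        fun h => hab (hQ'b.symm.trans h.1)
      rw [hsplit, Finset.filter_insert, Finset.filter_insert, if_neg hc1, if_neg hc2,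
        Finset.filter_congr (q := fun i => y.1 i = i ∧ y.2 i = true) ?_, hmm]
      intro i hi
      rw [Finset.mem_erase, Finset.mem_erase] at hi
      rw [hQ' i hi.2.1 hi.1, Function.update_of_ne hi.1, Function.update_of_ne hi.2.1]
  · intro x hx
    rw [Finset.mem_filter] at hx
    obtain ⟨hx, hQa, hεa⟩ := hx
    rw [mem_MSet] at hx
    obtain ⟨hinv, -, heps, -, -⟩ := hx
    have hεb : x.2 b = v := by rw [← hQa, heps, hεa]
    dsimp only
    ext1
    · dsimp only
      rw [← mul_assoc, Equiv.swap_mul_self, one_mul]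
    · dsimp only
      funext i
      by_cases h2 : i = b
      · rw [h2, Function.update_self, hεb]
      by_cases h1 : i = a
      · rw [h1, Function.update_of_ne hab, Function.update_self, hεa]
      · rw [Function.update_of_ne h2, Function.update_of_ne h1,
          Function.update_of_ne h2, Function.update_of_ne h1]
  · intro y hy
    rw [mem_MSet] at hy
    obtain ⟨-, hsupp, -, -, -⟩ := hy
    have hna : a ∉ (s.erase a).erase b := fun h =>
      Finset.notMem_erase a s (Finset.mem_of_mem_erase h)
    have hnb : b ∉ (s.erase a).erase b := Finset.notMem_erase b _
    dsimp only
    ext1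
    · dsimp only
      rw [← mul_assoc, Equiv.swap_mul_self, one_mul]
    · dsimp only
      funext i
      by_cases h2 : i = b
      · rw [h2, Function.update_self, (hsupp b hnb).2]
      by_cases h1 : i = a
      · rw [h1, Function.update_of_ne hab, Function.update_self, (hsupp a hna).2]
      · rw [Function.update_of_ne h2, Function.update_of_ne h1,
          Function.update_of_ne h2, Function.update_of_ne h1]

theorem MSet_empty : (MSet (∅ : Finset α) 0 0) = {(1, fun _ => false)} := by
  ext x
  rw [mem_MSet, Finset.mem_singleton]
  constructor
  · rintro ⟨-, hsupp, -, -, -⟩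
    ext1
    · exact Equiv.ext fun i => (hsupp i (Finset.notMem_empty i)).1
    · funext i; exact (hsupp i (Finset.notMem_empty i)).2
  · rintro rfl
    exact ⟨fun i => rfl, fun i _ => ⟨rfl, rfl⟩, fun i => rfl, by simp, by simp⟩

theorem MSet_empty_ne (mp mm : ℕ) (h : ¬(mp = 0 ∧ mm = 0)) :
    (MSet (∅ : Finset α) mp mm) = ∅ := by
  ext x
  rw [mem_MSet]
  simp only [Finset.notMem_empty, iff_false]
  rintro ⟨-, -, -, hmp, hmm⟩
  simp only [Finset.filter_empty, Finset.card_empty] at hmp hmm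
  exact h ⟨hmp.symm, hmm.symm⟩

theorem MSet_apply_mem {s : Finset α} {mp mm : ℕ} {x : Equiv.Perm α × (α → Bool)}
    (hx : x ∈ MSet s mp mm) {a : α} (ha : a ∈ s) : x.1 a ∈ s := by
  rw [mem_MSet] at hx
  by_contra h
  have h1 := (hx.2.1 (x.1 a) h).1
  rw [hx.1 a] at h1
  exact h (h1 ▸ ha)

theorem MSet_card_decomp (s : Finset α) {a : α} (ha : a ∈ s) (mp mm : ℕ) :
    (MSet s mp mm).card =
      (((MSet s mp mm).filter (fun x => x.1 a = a ∧ x.2 a = false)).card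
      + ((MSet s mp mm).filter (fun x => x.1 a = a ∧ x.2 a = true)).card)
      + ∑ b ∈ s.erase a,
          (((MSet s mp mm).filter (fun x => x.1 a = b ∧ x.2 a = false)).card
          + ((MSet s mp mm).filter (fun x => x.1 a = b ∧ x.2 a = true)).card) := by
  have hsplit : ∀ b, ((MSet s mp mm).filter (fun x => x.1 a = b)).card =
      ((MSet s mp mm).filter (fun x => x.1 a = b ∧ x.2 a = false)).card
      + ((MSet s mp mm).filter (fun x => x.1 a = b ∧ x.2 a = true)).card := by
    intro b
    rw [← Finset.filter_filter, ← Finset.filter_filter]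
    rw [← Finset.card_filter_add_card_filter_not
      (p := fun x : Equiv.Perm α × (α → Bool) => x.2 a = false)]
    congr 1
    refine congrArg Finset.card (Finset.filter_congr ?_)
    intro x _
    simp [Bool.not_eq_false]
  have hfib : (MSet s mp mm).card = ∑ b ∈ s, ((MSet s mp mm).filter (fun x => x.1 a = b)).card :=
    Finset.card_eq_sum_card_fiberwise (fun x hx => MSet_apply_mem hx ha)
  rw [hfib, ← Finset.add_sum_erase s _ ha, hsplit]
  congr 1
  exact Finset.sum_congr rfl (fun b _ => hsplit b)

private theorem arith_step (N mp mm k : ℕ) (h : mp + mm + 2*k = N) (h1 : 1 ≤ N) :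
    mp * (N-1).factorial + mm * (N-1).factorial + (N-1) * (2*k*(N-2).factorial)
      = N.factorial := by
  obtain ⟨M, rfl⟩ : ∃ M, N = M + 1 := ⟨N - 1, by omega⟩
  rcases M with _ | M'
  · obtain ⟨rfl, -⟩ : k = 0 ∧ mp + mm = 1 := by omega
    simp [Nat.factorial]
    omega
  · have h2 : M' + 1 + 1 - 1 = M' + 1 := by omega
    have h3 : M' + 1 + 1 - 2 = M' := by omega
    rw [h2, h3]
    have key : mp * (M'+1).factorial + mm * (M'+1).factorial + (M'+1) * (2*k*M'.factorial)
        = (mp + mm + 2*k) * ((M'+1) * M'.factorial) := by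
      rw [Nat.factorial_succ]
      ring
    rw [key, h, Nat.factorial_succ, Nat.factorial_succ]

theorem MSet_card_aux : ∀ (N : ℕ) (s : Finset α), s.card = N → ∀ mp mm : ℕ,
    (∀ k, mp + mm + 2*k = N →
      (MSet s mp mm).card * (mp.factorial * mm.factorial * k.factorial) = N.factorial)
    ∧ ((∀ k, mp + mm + 2*k ≠ N) → (MSet s mp mm).card = 0) := by
  intro N
  induction N using Nat.strong_induction_on with
  | _ N IH =>
    intro s hs mp mm
    rcases Nat.eq_zero_or_pos N with rfl | hN
    · rw [Finset.card_eq_zero] at hs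
      subst hs
      constructor
      · intro k hk
        obtain ⟨rfl, rfl, rfl⟩ : mp = 0 ∧ mm = 0 ∧ k = 0 := by omega
        rw [MSet_empty]
        simp [Nat.factorial]
      · intro hk
        by_cases h : mp = 0 ∧ mm = 0
        · exact absurd (by omega : mp + mm + 2*0 = 0) (hk 0)
        · rw [MSet_empty_ne mp mm h, Finset.card_empty]
    · obtain ⟨a, ha⟩ := Finset.card_pos.mp (hs ▸ hN)
      have hea : (s.erase a).card = N - 1 := by rw [Finset.card_erase_of_mem ha, hs]
      have hdecomp := MSet_card_decomp s ha mp mm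
      constructor
      · -- part (i)
        intro k hk
        set D := mp.factorial * mm.factorial * k.factorial with hDdef
        have hDD : ((MSet s mp mm).filter (fun x => x.1 a = a ∧ x.2 a = false)).card * D
            = mp * (N-1).factorial := by
          rcases mp with _ | mp'
          · rw [MSet_filter_diag_zero s ha, Finset.card_empty, zero_mul, zero_mul]
          · rw [MSet_filter_diag s ha mp' mm]
            have hk' : mp' + mm + 2*k = N - 1 := by omega
            have hIH := (IH (N-1) (by omega) (s.erase a) hea mp' mm).1 k hk'
            rw [hDdef, Nat.factorial_succ]
            calc (MSet (s.erase a) mp' mm).card * ((mp'+1) * mp'.factorial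
                  * mm.factorial * k.factorial)
                = (mp'+1) * ((MSet (s.erase a) mp' mm).card
                  * (mp'.factorial * mm.factorial * k.factorial)) := by ring
              _ = (mp'+1) * (N-1).factorial := by rw [hIH]
        have hAA : ((MSet s mp mm).filter (fun x => x.1 a = a ∧ x.2 a = true)).card * D
            = mm * (N-1).factorial := by
          rcases mm with _ | mm'
          · rw [MSet_filter_anti_zero s ha, Finset.card_empty, zero_mul, zero_mul]
          · rw [MSet_filter_anti s ha mp mm']
            have hk' : mp + mm' + 2*k = N - 1 := by omega
            have hIH := (IH (N-1) (by omega) (s.erase a) hea mp mm').1 k hk'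
            rw [hDdef, Nat.factorial_succ]
            calc (MSet (s.erase a) mp mm').card * (mp.factorial
                  * ((mm'+1) * mm'.factorial) * k.factorial)
                = (mm'+1) * ((MSet (s.erase a) mp mm').card
                  * (mp.factorial * mm'.factorial * k.factorial)) := by ring
              _ = (mm'+1) * (N-1).factorial := by rw [hIH]
        have hBB : ∀ b ∈ s.erase a,
            (((MSet s mp mm).filter (fun x => x.1 a = b ∧ x.2 a = false)).card
            + ((MSet s mp mm).filter (fun x => x.1 a = b ∧ x.2 a = true)).card) * D
            = 2 * k * (N-2).factorial := by
          intro b hbmem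
          obtain ⟨hbne, hb⟩ := Finset.mem_erase.mp hbmem
          have heeb : ((s.erase a).erase b).card = N - 2 := by
            rw [Finset.card_erase_of_mem hbmem, hea]
            omega
          have hNN : 2 ≤ N := by
            have := Finset.card_pos.mpr ⟨b, hbmem⟩
            omega
          rw [MSet_filter_pair s ha hb hbne mp mm false,
            MSet_filter_pair s ha hb hbne mp mm true]
          rcases k with _ | k'
          · have hzero : (MSet ((s.erase a).erase b) mp mm).card = 0 := by
              refine (IH (N-2) (by omega) _ heeb mp mm).2 (fun k' hk' => ?_)
              omega
            rw [hzero]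
            simp
          · have hk' : mp + mm + 2*k' = N - 2 := by omega
            have hIH := (IH (N-2) (by omega) _ heeb mp mm).1 k' hk'
            rw [hDdef, Nat.factorial_succ]
            calc ((MSet ((s.erase a).erase b) mp mm).card
                  + (MSet ((s.erase a).erase b) mp mm).card)
                  * (mp.factorial * mm.factorial * ((k'+1) * k'.factorial))
                = 2 * (k'+1) * ((MSet ((s.erase a).erase b) mp mm).card
                  * (mp.factorial * mm.factorial * k'.factorial)) := by ring
              _ = 2 * (k'+1) * (N-2).factorial := by rw [hIH]
        rw [hdecomp, add_mul, add_mul, hDD, hAA, Finset.sum_mul,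
          Finset.sum_congr rfl hBB, Finset.sum_const, hea, smul_eq_mul]
        exact arith_step N mp mm k hk hN
      · -- part (ii)
        intro hk
        rw [hdecomp]
        have hDD : ((MSet s mp mm).filter (fun x => x.1 a = a ∧ x.2 a = false)).card = 0 := by
          rcases mp with _ | mp'
          · rw [MSet_filter_diag_zero s ha, Finset.card_empty]
          · rw [MSet_filter_diag s ha mp' mm]
            refine (IH (N-1) (by omega) _ hea mp' mm).2 (fun k' hk' => ?_)
            exact hk k' (by omega)
        have hAA : ((MSet s mp mm).filter (fun x => x.1 a = a ∧ x.2 a = true)).card = 0 := by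
          rcases mm with _ | mm'
          · rw [MSet_filter_anti_zero s ha, Finset.card_empty]
          · rw [MSet_filter_anti s ha mp mm']
            refine (IH (N-1) (by omega) _ hea mp mm').2 (fun k' hk' => ?_)
            exact hk k' (by omega)
        have hBB : ∀ b ∈ s.erase a,
            (((MSet s mp mm).filter (fun x => x.1 a = b ∧ x.2 a = false)).card
            + ((MSet s mp mm).filter (fun x => x.1 a = b ∧ x.2 a = true)).card) = 0 := by
          intro b hbmem
          obtain ⟨hbne, hb⟩ := Finset.mem_erase.mp hbmem
          have heeb : ((s.erase a).erase b).card = N - 2 := by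
            rw [Finset.card_erase_of_mem hbmem, hea]
            omega
          have hNN : 2 ≤ N := by
            have := Finset.card_pos.mpr ⟨b, hbmem⟩
            omega
          have hzero : (MSet ((s.erase a).erase b) mp mm).card = 0 := by
            refine (IH (N-2) (by omega) _ heeb mp mm).2 (fun k' hk' => ?_)
            exact hk (k'+1) (by omega)
          rw [MSet_filter_pair s ha hb hbne mp mm false,
            MSet_filter_pair s ha hb hbne mp mm true, hzero]
        rw [hDD, hAA, Finset.sum_congr rfl hBB, Finset.sum_const]
        simp

theorem MSet_card (s : Finset α) (mp mm : ℕ) :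
    (MSet s mp mm).card =
    if mp + mm ≤ s.card ∧ (s.card - mp - mm) % 2 = 0 then
      s.card.factorial / (mp.factorial * mm.factorial * ((s.card - mp - mm) / 2).factorial)
    else 0 := by
  split_ifs with h
  · set k := (s.card - mp - mm) / 2 with hkdef
    have hk : mp + mm + 2*k = s.card := by omega
    have hd : 0 < mp.factorial * mm.factorial * k.factorial :=
      Nat.mul_pos (Nat.mul_pos mp.factorial_pos mm.factorial_pos) k.factorial_pos
    have hcard := (MSet_card_aux s.card s rfl mp mm).1 k hk
    exact (Nat.div_eq_of_eq_mul_left hd hcard.symm).symm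
  · exact (MSet_card_aux s.card s rfl mp mm).2 (fun k hk => h (by omega))


noncomputable def sHalf (n : ℕ) : Finset (Fin (2*n)) :=
  Finset.univ.filter (fun i => (i:ℕ) < n)

theorem mem_sHalf {n : ℕ} (i : Fin (2*n)) : i ∈ sHalf n ↔ (i:ℕ) < n := by simp [sHalf]

theorem sHalf_card (n : ℕ) : (sHalf n).card = n := by
  have : (sHalf n).card = (Finset.univ : Finset (Fin n)).card := by
    refine Finset.card_bij' (fun i hi => (⟨(i:ℕ), (Finset.mem_filter.mp hi).2⟩ : Fin n))
      (fun j _ => (⟨(j:ℕ), by have := j.isLt; omega⟩ : Fin (2*n))) ?_ ?_ ?_ ?_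
    · intros; exact Finset.mem_univ _
    · intro j _
      rw [mem_sHalf]
      exact j.isLt
    · intro i hi; ext; rfl
    · intro j _; ext; rfl
  rw [this, Finset.card_univ, Fintype.card_fin]

theorem rev_val {n : ℕ} (i : Fin (2*n)) : (i.rev : ℕ) = 2*n - 1 - i := by
  rw [Fin.val_rev]; omega

theorem rev_not_lt {n : ℕ} {i : Fin (2*n)} (h : (i:ℕ) < n) : ¬((i.rev:ℕ) < n) := by
  rw [rev_val]; omega

theorem rev_lt {n : ℕ} {i : Fin (2*n)} (h : ¬((i:ℕ) < n)) : (i.rev:ℕ) < n := by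
  have := i.isLt; rw [rev_val]; omega

noncomputable def qfun (n : ℕ) (P : Equiv.Perm (Fin (2*n))) : Fin (2*n) → Fin (2*n) := fun i =>
  if (i : ℕ) < n then (if ((P i : ℕ)) < n then P i else (P i).rev) else i

noncomputable def efun (n : ℕ) (P : Equiv.Perm (Fin (2*n))) : Fin (2*n) → Bool := fun i =>
  decide ((i:ℕ) < n ∧ ¬((P i : ℕ) < n))

noncomputable def pfun (n : ℕ) (Q : Equiv.Perm (Fin (2*n))) (ε : Fin (2*n) → Bool) :
    Fin (2*n) → Fin (2*n) := fun i =>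
  if (i:ℕ) < n then (if ε i then (Q i).rev else Q i)
  else (if ε i.rev then Q i.rev else (Q i.rev).rev)

theorem qfun_lt {n : ℕ} {P : Equiv.Perm (Fin (2*n))} {i : Fin (2*n)} (hi : (i:ℕ) < n)
    (hPi : ((P i : ℕ)) < n) : qfun n P i = P i := by
  simp only [qfun]; rw [if_pos hi, if_pos hPi]

theorem qfun_ge {n : ℕ} {P : Equiv.Perm (Fin (2*n))} {i : Fin (2*n)} (hi : (i:ℕ) < n)
    (hPi : ¬((P i : ℕ)) < n) : qfun n P i = (P i).rev := by
  simp only [qfun]; rw [if_pos hi, if_neg hPi]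

theorem qfun_out {n : ℕ} {P : Equiv.Perm (Fin (2*n))} {i : Fin (2*n)} (hi : ¬((i:ℕ) < n)) :
    qfun n P i = i := by
  simp only [qfun]; rw [if_neg hi]

theorem efun_eq {n : ℕ} {P : Equiv.Perm (Fin (2*n))} {i : Fin (2*n)} :
    efun n P i = true ↔ ((i:ℕ) < n ∧ ¬((P i : ℕ) < n)) := by
  simp [efun]

theorem efun_ne {n : ℕ} {P : Equiv.Perm (Fin (2*n))} {i : Fin (2*n)} :
    efun n P i = false ↔ ¬((i:ℕ) < n ∧ ¬((P i : ℕ) < n)) := by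
  simp [efun]

theorem pfun_in {n : ℕ} {Q : Equiv.Perm (Fin (2*n))} {ε : Fin (2*n) → Bool} {i : Fin (2*n)}
    (hi : (i:ℕ) < n) :
    pfun n Q ε i = if ε i then (Q i).rev else Q i := by
  simp only [pfun]; rw [if_pos hi]

theorem pfun_out {n : ℕ} {Q : Equiv.Perm (Fin (2*n))} {ε : Fin (2*n) → Bool} {i : Fin (2*n)}
    (hi : ¬((i:ℕ) < n)) :
    pfun n Q ε i = if ε i.rev then Q i.rev else (Q i.rev).rev := by
  simp only [pfun]; rw [if_neg hi]

theorem qfun_invol {n : ℕ} {P : Equiv.Perm (Fin (2*n))} (hinv : ∀ j, P (P j) = j)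
    (hsym : ∀ i : Fin (2*n), P i.rev = (P i).rev) : Function.Involutive (qfun n P) := by
  intro i
  by_cases hi : (i:ℕ) < n
  · by_cases hPi : ((P i : ℕ)) < n
    · rw [qfun_lt hi hPi, qfun_lt hPi (by rw [hinv]; exact hi), hinv]
    · have h1 : P (P i).rev = i.rev := by rw [hsym, hinv]
      rw [qfun_ge hi hPi, qfun_ge (rev_lt hPi) (by rw [h1]; exact rev_not_lt hi), h1,
        Fin.rev_rev]
  · rw [qfun_out hi, qfun_out hi]

theorem pfun_invol {n : ℕ} {Q : Equiv.Perm (Fin (2*n))} {ε : Fin (2*n) → Bool}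
    (hinv : ∀ j, Q (Q j) = j)
    (hsupp : ∀ i : Fin (2*n), ¬((i:ℕ) < n) → Q i = i ∧ ε i = false)
    (heps : ∀ i, ε (Q i) = ε i) : Function.Involutive (pfun n Q ε) := by
  have hmap : ∀ i : Fin (2*n), (i:ℕ) < n → ((Q i : ℕ)) < n := by
    intro i hi
    by_contra h
    have h1 := (hsupp (Q i) h).1
    rw [hinv] at h1
    exact h (h1 ▸ hi)
  intro i
  by_cases hi : (i:ℕ) < n
  · by_cases hε : ε i
    · rw [pfun_in hi, if_pos hε, pfun_out (rev_not_lt (hmap i hi)), Fin.rev_rev,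
        if_pos (by rw [heps]; exact hε), hinv]
    · rw [pfun_in hi, if_neg hε, pfun_in (hmap i hi),
        if_neg (by rw [heps]; exact hε), hinv]
  · have hirev : ((i.rev : ℕ)) < n := rev_lt hi
    by_cases hε : ε i.rev
    · rw [pfun_out hi, if_pos hε, pfun_in (hmap i.rev hirev),
        if_pos (by rw [heps]; exact hε), hinv, Fin.rev_rev]
    · rw [pfun_out hi, if_neg hε, pfun_out (rev_not_lt (hmap i.rev hirev)),
        Fin.rev_rev, if_neg (by rw [heps]; exact hε), hinv, Fin.rev_rev]

theorem Qmap {n : ℕ} {Q : Equiv.Perm (Fin (2*n))} {ε : Fin (2*n) → Bool}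
    (hinv : ∀ j, Q (Q j) = j)
    (hsupp : ∀ i : Fin (2*n), ¬((i:ℕ) < n) → Q i = i ∧ ε i = false) :
    ∀ i : Fin (2*n), (i:ℕ) < n → ((Q i : ℕ)) < n := by
  intro i hi
  by_contra h
  have h1 := (hsupp (Q i) h).1
  rw [hinv] at h1
  exact h (h1 ▸ hi)

theorem fwd_mem {n mp mm : ℕ} {P : Equiv.Perm (Fin (2*n))} (hinv : ∀ j, P (P j) = j)
    (hsym : ∀ i : Fin (2*n), P i.rev = (P i).rev)
    (hmp : (Finset.univ.filter (fun i : Fin (2*n) => (i:ℕ) < n ∧ P i = i)).card = mp)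
    (hmm : (Finset.univ.filter (fun i : Fin (2*n) => (i:ℕ) < n ∧ P i = i.rev)).card = mm) :
    (Function.Involutive.toPerm (qfun n P) (qfun_invol hinv hsym), efun n P)
      ∈ MSet (sHalf n) mp mm := by
  rw [mem_MSet]
  simp only [Function.Involutive.coe_toPerm]
  refine ⟨qfun_invol hinv hsym, ?_, ?_, ?_, ?_⟩
  · intro i hi
    rw [mem_sHalf] at hi
    exact ⟨qfun_out hi, efun_ne.mpr (fun h => hi h.1)⟩
  · intro i
    by_cases hi : (i:ℕ) < n
    · by_cases hPi : ((P i : ℕ)) < n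
      · rw [qfun_lt hi hPi]
        simp only [efun, decide_eq_decide]
        constructor
        · intro h
          exact absurd (by rw [hinv]; exact hi) h.2
        · intro h
          exact absurd hPi h.2
      · rw [qfun_ge hi hPi]
        simp only [efun, decide_eq_decide]
        have h1 : P (P i).rev = i.rev := by rw [hsym, hinv]
        constructor
        · intro _; exact ⟨hi, hPi⟩
        · intro _
          refine ⟨rev_lt hPi, ?_⟩
          rw [h1]
          exact rev_not_lt hi
    · rw [qfun_out hi]
  · rw [← hmp]
    congr 1
    ext i
    refine (Finset.mem_filter.trans ?_).trans Finset.mem_filter.symm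
    rw [mem_sHalf]
    constructor
    · rintro ⟨hi, hq, he⟩
      rw [efun_ne] at he
      have hPi : ((P i : ℕ)) < n := by
        by_contra h
        exact he ⟨hi, h⟩
      rw [qfun_lt hi hPi] at hq
      exact ⟨Finset.mem_univ i, hi, hq⟩
    · rintro ⟨-, hi, hP⟩
      have hPi : ((P i : ℕ)) < n := by rw [hP]; exact hi
      refine ⟨hi, ?_, ?_⟩
      · rw [qfun_lt hi hPi, hP]
      · rw [efun_ne]
        rintro ⟨-, h⟩
        exact h hPi
  · rw [← hmm]
    congr 1
    ext i
    refine (Finset.mem_filter.trans ?_).trans Finset.mem_filter.symm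
    rw [mem_sHalf]
    constructor
    · rintro ⟨hi, hq, he⟩
      rw [efun_eq] at he
      rw [qfun_ge hi he.2] at hq
      refine ⟨Finset.mem_univ i, hi, ?_⟩
      have := congrArg Fin.rev hq
      rwa [Fin.rev_rev] at this
    · rintro ⟨-, hi, hP⟩
      have hPi : ¬((P i : ℕ)) < n := by rw [hP]; exact rev_not_lt hi
      refine ⟨hi, ?_, efun_eq.mpr ⟨hi, hPi⟩⟩
      rw [qfun_ge hi hPi, hP, Fin.rev_rev]

theorem bwd_mem {n mp mm : ℕ} {Q : Equiv.Perm (Fin (2*n))} {ε : Fin (2*n) → Bool}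
    (hinv : ∀ j, Q (Q j) = j)
    (hsupp : ∀ i : Fin (2*n), ¬((i:ℕ) < n) → Q i = i ∧ ε i = false)
    (heps : ∀ i, ε (Q i) = ε i)
    (hmp : ((sHalf n).filter (fun i => Q i = i ∧ ε i = false)).card = mp)
    (hmm : ((sHalf n).filter (fun i => Q i = i ∧ ε i = true)).card = mm) :
    (∀ j, (Function.Involutive.toPerm (pfun n Q ε) (pfun_invol hinv hsupp heps))
        ((Function.Involutive.toPerm (pfun n Q ε) (pfun_invol hinv hsupp heps)) j) = j) ∧
    (∀ i : Fin (2*n), (Function.Involutive.toPerm (pfun n Q ε) (pfun_invol hinv hsupp heps)) i.rev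
        = ((Function.Involutive.toPerm (pfun n Q ε) (pfun_invol hinv hsupp heps)) i).rev) ∧
    (Finset.univ.filter (fun i : Fin (2*n) => (i:ℕ) < n ∧
        (Function.Involutive.toPerm (pfun n Q ε) (pfun_invol hinv hsupp heps)) i = i)).card = mp ∧
    (Finset.univ.filter (fun i : Fin (2*n) => (i:ℕ) < n ∧
        (Function.Involutive.toPerm (pfun n Q ε) (pfun_invol hinv hsupp heps)) i = i.rev)).card
      = mm := by
  have hmap := Qmap hinv hsupp
  simp only [Function.Involutive.coe_toPerm]
  refine ⟨pfun_invol hinv hsupp heps, ?_, ?_, ?_⟩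
  · intro i
    by_cases hi : (i:ℕ) < n
    · rw [pfun_out (rev_not_lt hi), pfun_in hi, Fin.rev_rev]
      by_cases hε : ε i
      · rw [if_pos hε, if_pos hε, Fin.rev_rev]
      · rw [if_neg hε, if_neg hε]
    · rw [pfun_in (rev_lt hi), pfun_out hi]
      by_cases hε : ε i.rev
      · rw [if_pos hε, if_pos hε]
      · rw [if_neg hε, if_neg hε, Fin.rev_rev]
  · rw [← hmp]
    congr 1
    ext i
    refine (Finset.mem_filter.trans ?_).trans Finset.mem_filter.symm
    rw [mem_sHalf]
    constructor
    · rintro ⟨-, hi, hp⟩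
      rw [pfun_in hi] at hp
      by_cases hε : ε i
      · rw [if_pos hε] at hp
        exfalso
        have := congrArg Fin.rev hp
        rw [Fin.rev_rev] at this
        have h2 := rev_not_lt hi
        rw [← this] at h2
        exact h2 (hmap i hi)
      · rw [if_neg hε] at hp
        exact ⟨hi, hp, Bool.not_eq_true _ ▸ (by simpa using hε)⟩
    · rintro ⟨hi, hQ, hε⟩
      refine ⟨Finset.mem_univ i, hi, ?_⟩
      rw [pfun_in hi, if_neg (by rw [hε]; simp), hQ]
  · rw [← hmm]
    congr 1
    ext i
    refine (Finset.mem_filter.trans ?_).trans Finset.mem_filter.symm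
    rw [mem_sHalf]
    constructor
    · rintro ⟨-, hi, hp⟩
      rw [pfun_in hi] at hp
      by_cases hε : ε i
      · rw [if_pos hε] at hp
        have := congrArg Fin.rev hp
        rw [Fin.rev_rev, Fin.rev_rev] at this
        exact ⟨hi, this, hε⟩
      · rw [if_neg hε] at hp
        exfalso
        have h2 := rev_not_lt hi
        rw [← hp] at h2
        exact h2 (hmap i hi)
    · rintro ⟨hi, hQ, hε⟩
      refine ⟨Finset.mem_univ i, hi, ?_⟩
      rw [pfun_in hi, if_pos hε, hQ]

theorem left_apply {n : ℕ} {P : Equiv.Perm (Fin (2*n))} (hinv : ∀ j, P (P j) = j)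
    (hsym : ∀ i : Fin (2*n), P i.rev = (P i).rev) (i : Fin (2*n)) :
    pfun n (Function.Involutive.toPerm (qfun n P) (qfun_invol hinv hsym)) (efun n P) i
      = P i := by
  have hco : ∀ x, (Function.Involutive.toPerm (qfun n P) (qfun_invol hinv hsym)) x
      = qfun n P x := fun x => rfl
  by_cases hi : (i:ℕ) < n
  · rw [pfun_in hi, hco]
    by_cases hPi : ((P i : ℕ)) < n
    · rw [if_neg (fun h => (efun_eq.mp h).2 hPi), qfun_lt hi hPi]
    · rw [if_pos (efun_eq.mpr ⟨hi, hPi⟩), qfun_ge hi hPi, Fin.rev_rev]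
  · have hrev : ((i.rev : ℕ)) < n := rev_lt hi
    have hPr : P i = (P i.rev).rev := by
      have := hsym i.rev
      rwa [Fin.rev_rev] at this
    rw [pfun_out hi, hco]
    by_cases hPi : ((P i.rev : ℕ)) < n
    · rw [if_neg (fun h => (efun_eq.mp h).2 hPi), qfun_lt hrev hPi, hPr]
    · rw [if_pos (efun_eq.mpr ⟨hrev, hPi⟩), qfun_ge hrev hPi, hPr]

theorem right_apply_a {n : ℕ} {Q : Equiv.Perm (Fin (2*n))} {ε : Fin (2*n) → Bool}
    (hinv : ∀ j, Q (Q j) = j)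
    (hsupp : ∀ i : Fin (2*n), ¬((i:ℕ) < n) → Q i = i ∧ ε i = false)
    (heps : ∀ i, ε (Q i) = ε i) (i : Fin (2*n)) :
    qfun n (Function.Involutive.toPerm (pfun n Q ε) (pfun_invol hinv hsupp heps)) i
      = Q i := by
  have hmap := Qmap hinv hsupp
  have hco : ∀ x, (Function.Involutive.toPerm (pfun n Q ε) (pfun_invol hinv hsupp heps)) x
      = pfun n Q ε x := fun x => rfl
  by_cases hi : (i:ℕ) < n
  · by_cases hε : ε i
    · have hp : pfun n Q ε i = (Q i).rev := by rw [pfun_in hi, if_pos hε]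
      rw [qfun_ge hi (by rw [hco, hp]; exact rev_not_lt (hmap i hi)), hco, hp, Fin.rev_rev]
    · have hp : pfun n Q ε i = Q i := by rw [pfun_in hi, if_neg hε]
      rw [qfun_lt hi (by rw [hco, hp]; exact hmap i hi), hco, hp]
  · rw [qfun_out hi, (hsupp i hi).1]

theorem right_apply_b {n : ℕ} {Q : Equiv.Perm (Fin (2*n))} {ε : Fin (2*n) → Bool}
    (hinv : ∀ j, Q (Q j) = j)
    (hsupp : ∀ i : Fin (2*n), ¬((i:ℕ) < n) → Q i = i ∧ ε i = false)
    (heps : ∀ i, ε (Q i) = ε i) (i : Fin (2*n)) :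
    efun n (Function.Involutive.toPerm (pfun n Q ε) (pfun_invol hinv hsupp heps)) i
      = ε i := by
  have hmap := Qmap hinv hsupp
  have hco : (Function.Involutive.toPerm (pfun n Q ε) (pfun_invol hinv hsupp heps)) i
      = pfun n Q ε i := rfl
  by_cases hi : (i:ℕ) < n
  · by_cases hε : ε i
    · rw [hε, efun_eq]
      refine ⟨hi, ?_⟩
      rw [hco, pfun_in hi, if_pos hε]
      exact rev_not_lt (hmap i hi)
    · rw [Bool.not_eq_true] at hε
      rw [hε, efun_ne]
      rintro ⟨-, h⟩
      apply h
      rw [hco, pfun_in hi, if_neg (by simp [hε])]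
      exact hmap i hi
  · rw [(hsupp i hi).2, efun_ne]
    exact fun h => hi h.1

theorem SSet_card_eq (n mp mm : ℕ) :
    (Finset.univ.filter (fun P : Equiv.Perm (Fin (2 * n)) =>
        (∀ j, P (P j) = j) ∧
        (∀ i, P i.rev = (P i).rev) ∧
        (Finset.univ.filter (fun i : Fin (2 * n) => (i : ℕ) < n ∧ P i = i)).card = mp ∧
        (Finset.univ.filter (fun i : Fin (2 * n) => (i : ℕ) < n ∧ P i = i.rev)).card
          = mm)).card = (MSet (sHalf n) mp mm).card := by
  refine Finset.card_bij'
    (fun P hP => (Function.Involutive.toPerm (qfun n P)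
      (qfun_invol (Finset.mem_filter.mp hP).2.1 (Finset.mem_filter.mp hP).2.2.1), efun n P))
    (fun y hy => Function.Involutive.toPerm (pfun n y.1 y.2)
      (pfun_invol (mem_MSet.mp hy).1
        (fun (i : Fin (2*n)) (hi : ¬((i:ℕ) < n)) => (mem_MSet.mp hy).2.1 i (fun hmem => hi ((mem_sHalf i).mp hmem)))
        (mem_MSet.mp hy).2.2.1))
    ?_ ?_ ?_ ?_
  · intro P hP
    obtain ⟨-, h1, h2, h3, h4⟩ := Finset.mem_filter.mp hP
    exact fwd_mem h1 h2 h3 h4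
  · intro y hy
    obtain ⟨h1, h2, h3, h4, h5⟩ := mem_MSet.mp hy
    rw [Finset.mem_filter]
    refine ⟨Finset.mem_univ _, ?_⟩
    exact bwd_mem h1 (fun (i : Fin (2*n)) (hi : ¬((i:ℕ) < n)) => h2 i (fun hmem => hi ((mem_sHalf i).mp hmem))) h3 h4 h5
  · intro P hP
    obtain ⟨-, h1, h2, h3, h4⟩ := Finset.mem_filter.mp hP
    exact Equiv.ext (left_apply h1 h2)
  · intro y hy
    obtain ⟨h1, h2, h3, h4, h5⟩ := mem_MSet.mp hy
    have h2' : ∀ i : Fin (2*n), ¬((i:ℕ) < n) → y.1 i = i ∧ y.2 i = false :=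
      fun i hi => h2 i (fun hmem => hi ((mem_sHalf i).mp hmem))
    ext1
    · exact Equiv.ext (right_apply_a h1 h2' h3)
    · funext i
      exact right_apply_b h1 h2' h3 i


/-- The number of involutions of `{1,...,2n}` commuting with the
central reflection, with exactly `m₊` diagonal points and `m₋` anti-diagonal
points among `{1,...,n}`, equals `t_{n,m₊,m₋} = n!/(m₊! m₋! ((n-m₊-m₋)/2)!)`
when `n - m₊ - m₋` is even and nonnegative, and `0` otherwise. -/
theorem count_doubly_symmetric_involutions (n mp mm : ℕ) :
    (Finset.univ.filter (fun P : Equiv.Perm (Fin (2 * n)) =>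
        (∀ j, P (P j) = j) ∧
        (∀ i, P i.rev = (P i).rev) ∧
        (Finset.univ.filter (fun i : Fin (2 * n) => (i : ℕ) < n ∧ P i = i)).card = mp ∧
        (Finset.univ.filter (fun i : Fin (2 * n) => (i : ℕ) < n ∧ P i = i.rev)).card = mm)).card =
    if mp + mm ≤ n ∧ (n - mp - mm) % 2 = 0 then
      n.factorial / (mp.factorial * mm.factorial * ((n - mp - mm) / 2).factorial)
    else 0 := by
  rw [SSet_card_eq n mp mm, MSet_card (sHalf n) mp mm, sHalf_card]
end

section
/- Let q : ℝ → ℝ solve the Painlevé II equation q'' = sq + 2q^3 and let a(s,y), b(s,y) solve the linear system ∂a/∂s = q b, ∂b/∂s = q a − y b, ∂a/∂y = q^2 a − (q' + yq) b, ∂b/∂y = (q' − yq) a + (y^2 − s − q^2) b, with initial condition a(s,0) = −b(s,0) = e^{−U(s)} where U(s) = −∫_s^∞ q(t) dt. Then a(s,y) = −b(s,−y) e^{y^3/3 − sy} for all s, y. -/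
open MeasureTheory

/-- Forward Gronwall vanishing lemma. -/
lemma aux_zero_forward {f f' : ℝ → ℝ × ℝ} {C : ℝ → ℝ}
    (hf : ∀ t, HasDerivAt f (f' t) t) (hC : Continuous C)
    (hb : ∀ t, ‖f' t‖ ≤ C t * ‖f t‖) (h0 : f 0 = 0) :
    ∀ t, 0 ≤ t → f t = 0 := by
  intro T hT
  obtain ⟨K, hKmem, hK⟩ := isCompact_Icc.exists_isMaxOn (Set.nonempty_Icc.2 hT)
    hC.continuousOn
  have hcont : ContinuousOn f (Set.Icc 0 T) :=
    (continuous_iff_continuousAt.2 fun t => (hf t).continuousAt).continuousOn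
  have key := norm_le_gronwallBound_of_norm_deriv_right_le (f' := f') (δ := 0)
    (K := C K) (ε := 0) hcont
    (fun t _ => (hf t).hasDerivWithinAt)
    (by simp [h0])
    (fun t ht => by
      have h1 : C t ≤ C K := hK (Set.mem_Icc_of_Ico ht)
      calc ‖f' t‖ ≤ C t * ‖f t‖ := hb t
        _ ≤ C K * ‖f t‖ + 0 := by nlinarith [norm_nonneg (f t)])
  have := key T (Set.right_mem_Icc.2 hT)
  rw [gronwallBound_ε0_δ0] at this
  exact norm_le_zero_iff.1 this

/-- Two-sided Gronwall vanishing lemma. -/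
lemma aux_zero {f f' : ℝ → ℝ × ℝ} {C : ℝ → ℝ}
    (hf : ∀ t, HasDerivAt f (f' t) t) (hC : Continuous C)
    (hb : ∀ t, ‖f' t‖ ≤ C t * ‖f t‖) (h0 : f 0 = 0) :
    ∀ t, f t = 0 := by
  intro t
  rcases le_or_gt 0 t with ht | ht
  · exact aux_zero_forward hf hC hb h0 t ht
  · have hg : ∀ u, HasDerivAt (fun u => f (-u)) (-(f' (-u))) u := fun u => by
      have h2 := (hf (-u)).scomp u (hasDerivAt_neg u)
      simpa [Function.comp_def] using h2
    have := aux_zero_forward (f := fun u => f (-u)) (f' := fun u => -(f' (-u)))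
      (C := fun u => C (-u)) hg (hC.comp continuous_neg)
      (fun u => by simpa using hb (-u)) (by simpa using h0) (-t) (by linarith)
    simpa using this

/-- Reflection identity `a(s,y) = -b(s,-y) e^{y³/3 - sy}` for the
solutions of the Lax system associated with the Painlevé II transcendent `q`,
with initial data `a(s,0) = -b(s,0) = e^{-U(s)}`, `U(s) = -∫_s^∞ q(t) dt`. -/
theorem reflection_identity_baik_rains
    (q : ℝ → ℝ) (hq_cont : Continuous q) (hq'_cont : Continuous (deriv q))
    (hq : ∀ s, deriv (deriv q) s = s * q s + 2 * (q s) ^ 3)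
    (hq_int : ∀ s : ℝ, IntegrableOn q (Set.Ioi s))
    (a b : ℝ → ℝ → ℝ)
    (ha_s : ∀ s y, deriv (fun s' => a s' y) s = q s * b s y)
    (hb_s : ∀ s y, deriv (fun s' => b s' y) s = q s * a s y - y * b s y)
    (ha_y : ∀ s y, deriv (fun y' => a s y') y =
      (q s) ^ 2 * a s y - (deriv q s + y * q s) * b s y)
    (hb_y : ∀ s y, deriv (fun y' => b s y') y =
      (deriv q s - y * q s) * a s y + (y ^ 2 - s - (q s) ^ 2) * b s y)
    (ha_diff : ∀ s, Differentiable ℝ (fun y' => a s y'))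
    (hb_diff : ∀ s, Differentiable ℝ (fun y' => b s y'))
    (hinit : ∀ s, a s 0 = Real.exp (-(-(∫ t in Set.Ioi s, q t))) ∧
      b s 0 = -Real.exp (-(-(∫ t in Set.Ioi s, q t)))) :
    ∀ s y, a s y = -b s (-y) * Real.exp (y ^ 3 / 3 - s * y) := by
  intro s
  set Q := q s with hQ
  set Q' := deriv q s with hQ'
  set E : ℝ → ℝ := fun y => Real.exp (y ^ 3 / 3 - s * y) with hE
  have hEderiv : ∀ y, HasDerivAt E ((y ^ 2 - s) * E y) y := by
    intro y
    have h1 : HasDerivAt (fun y : ℝ => y ^ 3 / 3 - s * y) (y ^ 2 - s) y := by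
      have := ((hasDerivAt_pow 3 y).div_const 3).sub ((hasDerivAt_id y).const_mul s)
      exact this.congr_deriv (by ring)
    simpa [mul_comm] using h1.exp
  have hA : ∀ y, HasDerivAt (fun y' => a s y')
      (Q ^ 2 * a s y - (Q' + y * Q) * b s y) y := by
    intro y
    have := (ha_diff s y).hasDerivAt
    rwa [ha_y s y] at this
  have hB : ∀ y, HasDerivAt (fun y' => b s y')
      ((Q' - y * Q) * a s y + (y ^ 2 - s - Q ^ 2) * b s y) y := by
    intro y
    have := (hb_diff s y).hasDerivAt
    rwa [hb_y s y] at this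
  -- u, v : the differences
  set u : ℝ → ℝ := fun y => a s y + b s (-y) * E y with hu
  set v : ℝ → ℝ := fun y => b s y + a s (-y) * E y with hv
  have hAneg : ∀ y, HasDerivAt (fun y' => a s (-y'))
      (-(Q ^ 2 * a s (-y) - (Q' + (-y) * Q) * b s (-y))) y := fun y => by
    simpa [Function.comp_def] using (hA (-y)).comp y (hasDerivAt_neg y)
  have hBneg : ∀ y, HasDerivAt (fun y' => b s (-y'))
      (-((Q' - (-y) * Q) * a s (-y) + ((-y) ^ 2 - s - Q ^ 2) * b s (-y))) y := fun y => by
    simpa [Function.comp_def] using (hB (-y)).comp y (hasDerivAt_neg y)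
  have hu' : ∀ y, HasDerivAt u (Q ^ 2 * u y - (Q' + y * Q) * v y) y := by
    intro y
    have := (hA y).add ((hBneg y).mul (hEderiv y))
    refine this.congr_deriv ?_
    simp only [hu, hv]
    ring
  have hv' : ∀ y, HasDerivAt v ((Q' - y * Q) * u y + (y ^ 2 - s - Q ^ 2) * v y) y := by
    intro y
    have := (hB y).add ((hAneg y).mul (hEderiv y))
    refine this.congr_deriv ?_
    simp only [hu, hv]
    ring
  set f : ℝ → ℝ × ℝ := fun y => (u y, v y) with hf
  set f' : ℝ → ℝ × ℝ := fun y =>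
    (Q ^ 2 * u y - (Q' + y * Q) * v y,
     (Q' - y * Q) * u y + (y ^ 2 - s - Q ^ 2) * v y) with hf'
  have hfd : ∀ y, HasDerivAt f (f' y) y := fun y => (hu' y).prodMk (hv' y)
  set C : ℝ → ℝ := fun y =>
    (Q ^ 2 + |Q' + y * Q|) + (|Q' - y * Q| + |y ^ 2 - s - Q ^ 2|) with hC
  have hCc : Continuous C := by
    apply Continuous.add
    · exact (continuous_const.add (continuous_const.add
        (continuous_id.mul continuous_const)).abs)
    · exact ((continuous_const.sub (continuous_id.mul continuous_const)).abs.add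
        ((continuous_pow 2 |>.sub continuous_const |>.sub continuous_const).abs))
  have hbound : ∀ y, ‖f' y‖ ≤ C y * ‖f y‖ := by
    intro y
    have hfy : ‖f y‖ = max ‖u y‖ ‖v y‖ := rfl
    have hfy' : ‖f' y‖ = max ‖Q ^ 2 * u y - (Q' + y * Q) * v y‖
        ‖(Q' - y * Q) * u y + (y ^ 2 - s - Q ^ 2) * v y‖ := rfl
    rw [hfy, hfy']
    have hu1 : |u y| ≤ max ‖u y‖ ‖v y‖ := le_max_left _ _
    have hv1 : |v y| ≤ max ‖u y‖ ‖v y‖ := le_max_right _ _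
    have hm : (0:ℝ) ≤ max ‖u y‖ ‖v y‖ := le_trans (norm_nonneg _) (le_max_left _ _)
    apply max_le
    · calc ‖Q ^ 2 * u y - (Q' + y * Q) * v y‖
          ≤ |Q ^ 2 * u y| + |(Q' + y * Q) * v y| := abs_sub _ _
        _ = Q ^ 2 * |u y| + |Q' + y * Q| * |v y| := by
            rw [abs_mul, abs_mul, abs_of_nonneg (sq_nonneg Q)]
        _ ≤ Q ^ 2 * (max ‖u y‖ ‖v y‖) + |Q' + y * Q| * (max ‖u y‖ ‖v y‖) := by
            nlinarith [mul_nonneg (sq_nonneg Q) (sub_nonneg.2 hu1),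
              mul_nonneg (abs_nonneg (Q' + y * Q)) (sub_nonneg.2 hv1)]
        _ ≤ C y * max ‖u y‖ ‖v y‖ := by
            simp only [hC]
            nlinarith [abs_nonneg (Q' - y * Q), abs_nonneg (y ^ 2 - s - Q ^ 2)]
    · calc ‖(Q' - y * Q) * u y + (y ^ 2 - s - Q ^ 2) * v y‖
          ≤ |(Q' - y * Q) * u y| + |(y ^ 2 - s - Q ^ 2) * v y| := abs_add_le _ _
        _ = |Q' - y * Q| * |u y| + |y ^ 2 - s - Q ^ 2| * |v y| := by
            rw [abs_mul, abs_mul]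
        _ ≤ |Q' - y * Q| * (max ‖u y‖ ‖v y‖)
            + |y ^ 2 - s - Q ^ 2| * (max ‖u y‖ ‖v y‖) := by
            nlinarith [mul_nonneg (abs_nonneg (Q' - y * Q)) (sub_nonneg.2 hu1),
              mul_nonneg (abs_nonneg (y ^ 2 - s - Q ^ 2)) (sub_nonneg.2 hv1)]
        _ ≤ C y * max ‖u y‖ ‖v y‖ := by
            simp only [hC]
            nlinarith [abs_nonneg (Q' + y * Q), sq_nonneg Q]
  have h0 : f 0 = 0 := by
    obtain ⟨h1, h2⟩ := hinit s
    have : E 0 = 1 := by simp [hE]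
    simp only [hf, hu, hv, Prod.mk_eq_zero]
    constructor <;> simp [h1, h2, this]
  have hzero := aux_zero hfd hCc hbound h0
  intro y
  have := hzero y
  have h1 : u y = 0 := by
    have := congrArg Prod.fst this
    simpa [hf] using this
  simp only [hu] at h1
  have : a s y = -(b s (-y) * E y) := by linarith
  rw [this, hE]
  ring
end
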